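/- Every compact subgroup of GL_n(ℚ_p) is contained in a conjugate of GL_n(ℤ_p). -/

import Mathlib

open Matrix

/-- Every compact subgroup of `GL n ℚ_p` is contained in a conjugate of
`GL n ℤ_p`. -/
theorem stmt7 (p : ℕ) [Fact p.Prime] (n : ℕ)
    (G : Subgroup (GL (Fin n) ℚ_[p])) (hG : IsCompact (G : Set (GL (Fin n) ℚ_[p]))) :
    ∃ g : GL (Fin n) ℚ_[p], ∀ x ∈ G,
      g⁻¹ * x * g ∈
        (Units.map ((PadicInt.Coe.ringHom (p := p)).mapMatrix.toMonoidHom) :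
          GL (Fin n) ℤ_[p] →* GL (Fin n) ℚ_[p]).range := by
  classical
  have hp1 : (1:ℝ) < (p:ℝ) := by
    exact_mod_cast (Fact.out : p.Prime).one_lt
  -- Step 1: bound the matrix entries of elements of G
  obtain ⟨C, hC⟩ : ∃ C : ℝ, ∀ x ∈ G, ∀ i j,
      ‖((x : GL (Fin n) ℚ_[p]) : Matrix (Fin n) (Fin n) ℚ_[p]) i j‖ ≤ C := by
    have hCij : ∀ ij : Fin n × Fin n, ∃ C : ℝ, ∀ x ∈ G,
        ‖((x : GL (Fin n) ℚ_[p]) : Matrix (Fin n) (Fin n) ℚ_[p]) ij.1 ij.2‖ ≤ C := by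
      intro ij
      have hcont : Continuous fun x : GL (Fin n) ℚ_[p] =>
          ‖((x : GL (Fin n) ℚ_[p]) : Matrix (Fin n) (Fin n) ℚ_[p]) ij.1 ij.2‖ :=
        continuous_norm.comp
          ((Units.continuous_val :
            Continuous fun u : GL (Fin n) ℚ_[p] =>
              (u : Matrix (Fin n) (Fin n) ℚ_[p])).matrix_elem ij.1 ij.2)
      obtain ⟨C, hC⟩ := (hG.image hcont).bddAbove
      exact ⟨C, fun x hx => hC ⟨x, hx, rfl⟩⟩
    choose Cf hCf using hCij
    refine ⟨∑ ij : Fin n × Fin n, |Cf ij|, fun x hx i j => ?_⟩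
    calc ‖((x : GL (Fin n) ℚ_[p]) : Matrix (Fin n) (Fin n) ℚ_[p]) i j‖
        ≤ Cf (i, j) := hCf (i, j) x hx
      _ ≤ |Cf (i, j)| := le_abs_self _
      _ ≤ ∑ ij : Fin n × Fin n, |Cf ij| :=
          Finset.single_le_sum (fun ij _ => abs_nonneg (Cf ij)) (Finset.mem_univ (i, j))
  obtain ⟨k, hk⟩ : ∃ k : ℕ, C ≤ (p:ℝ) ^ k := by
    obtain ⟨k, hk⟩ := pow_unbounded_of_one_lt C hp1
    exact ⟨k, le_of_lt hk⟩
  set c : ℚ_[p] := (p : ℚ_[p]) ^ (-(k:ℤ)) with hc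
  have hcnorm : ‖c‖ = (p:ℝ) ^ k := by
    rw [hc, Padic.norm_p_zpow]; simp
  have hc0 : c ≠ 0 := by
    intro h
    have := hcnorm
    rw [h, norm_zero] at this
    exact absurd this.symm (ne_of_gt (pow_pos (lt_trans zero_lt_one hp1) k))
  -- the standard basis
  set e : Module.Basis (Fin n) ℚ_[p] (Fin n → ℚ_[p]) := Pi.basisFun ℚ_[p] (Fin n) with he
  -- the standard lattice
  set L0 : Submodule ℤ_[p] (Fin n → ℚ_[p]) := Submodule.span ℤ_[p] (Set.range ⇑e) with hL0
  -- each x in G acts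
  set F : G → ((Fin n → ℚ_[p]) →ₗ[ℤ_[p]] (Fin n → ℚ_[p])) := fun x =>
    (Matrix.toLin' ((x : GL (Fin n) ℚ_[p]) : Matrix (Fin n) (Fin n) ℚ_[p])).restrictScalars
      ℤ_[p] with hF
  have hFmul : ∀ x y : G, F (x * y) = (F x).comp (F y) := by
    intro x y
    rw [hF]
    ext v i
    simp [Matrix.toLin'_mul]
  -- the lattice generated by G
  set L : Submodule ℤ_[p] (Fin n → ℚ_[p]) := ⨆ x : G, L0.map (F x) with hLdef
  have hL0L : L0 ≤ L := by
    have h1 : L0.map (F 1) = L0 := by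
      have : F 1 = LinearMap.id := by
        rw [hF]; ext v i; simp
      rw [this, Submodule.map_id]
    calc L0 = L0.map (F 1) := h1.symm
      _ ≤ L := le_iSup (fun x : G => L0.map (F x)) 1
  have hstabL : ∀ x : G, L.map (F x) ≤ L := by
    intro x
    rw [hLdef, Submodule.map_iSup]
    refine iSup_le fun y => ?_
    rw [← Submodule.map_comp, ← hFmul]
    exact le_iSup (fun z : G => L0.map (F z)) (x * y)
  have hstab : ∀ x : G, ∀ v ∈ L,
      Matrix.toLin' ((x : GL (Fin n) ℚ_[p]) : Matrix (Fin n) (Fin n) ℚ_[p]) v ∈ L := by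
    intro x v hv
    exact hstabL x ⟨v, hv, rfl⟩
  -- the bounding submodule
  set M : Submodule ℤ_[p] (Fin n → ℚ_[p]) :=
    { carrier := {v | ∀ i, ‖v i‖ ≤ ‖c‖}
      add_mem' := by
        intro a b ha hb i
        exact le_trans (Padic.nonarchimedean _ _) (max_le (ha i) (hb i))
      zero_mem' := by intro i; simp [norm_nonneg]
      smul_mem' := by
        intro a v hv i
        show ‖a • v i‖ ≤ ‖c‖
        rw [Algebra.smul_def, PadicInt.algebraMap_apply, norm_mul]
        calc ‖(a : ℚ_[p])‖ * ‖v i‖ ≤ 1 * ‖c‖ := by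
              refine mul_le_mul ?_ (hv i) (norm_nonneg _) zero_le_one
              rw [PadicInt.padic_norm_e_of_padicInt]
              exact PadicInt.norm_le_one a
          _ = ‖c‖ := one_mul _ } with hM
  have hLM : L ≤ M := by
    rw [hLdef]
    refine iSup_le fun x => ?_
    rw [hL0, Submodule.map_span, Submodule.span_le]
    rintro _ ⟨_, ⟨j, rfl⟩, rfl⟩
    show ∀ i, ‖F x (e j) i‖ ≤ ‖c‖
    intro i
    have hentry : F x (e j) i =
        ((x : GL (Fin n) ℚ_[p]) : Matrix (Fin n) (Fin n) ℚ_[p]) i j := by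
      simp [hF, Matrix.toLin'_apply, he, Pi.basisFun_apply, Matrix.mulVec_single_one]
    rw [hentry, hcnorm]
    exact le_trans (hC _ x.2 i j) hk
  -- the scaled coercion map
  set φ : (Fin n → ℤ_[p]) →ₗ[ℤ_[p]] (Fin n → ℚ_[p]) :=
    ((LinearMap.lsmul ℚ_[p] (Fin n → ℚ_[p]) c).restrictScalars ℤ_[p]).comp
      (LinearMap.pi fun i => (Algebra.linearMap ℤ_[p] ℚ_[p]).comp (LinearMap.proj i)) with hφ
  have hφapp : ∀ v i, φ v i = c * (v i : ℚ_[p]) := by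
    intro v i
    simp [hφ, Algebra.smul_def, PadicInt.algebraMap_apply]
  have hφinj : Function.Injective φ := by
    intro v w h
    ext i
    have := congrFun h i
    rw [hφapp, hφapp] at this
    exact Subtype.ext (mul_left_cancel₀ hc0 this)
  have hLr : L ≤ LinearMap.range φ := by
    intro v hv
    have hvM := hLM hv
    refine ⟨fun i => (⟨v i / c, ?_⟩ : ℤ_[p]), ?_⟩
    · rw [norm_div]
      exact div_le_one_of_le₀ (hvM i) (norm_nonneg c)
    · ext i
      refine (hφapp _ i).trans ?_
      dsimp only
      show c * (v i / c) = v i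
      rw [mul_comm, div_mul_cancel₀ _ hc0]
  set N : Submodule ℤ_[p] (Fin n → ℤ_[p]) := L.comap φ with hN
  have hmapN : N.map φ = L := by
    rw [hN, Submodule.map_comap_eq, inf_eq_right.mpr hLr]
  obtain ⟨m, bN⟩ := Submodule.basisOfPid (Pi.basisFun ℤ_[p] (Fin n)) N
  set eqNL : N ≃ₗ[ℤ_[p]] L :=
    (Submodule.equivMapOfInjective φ hφinj N).trans (LinearEquiv.ofEq _ _ hmapN) with heq
  set bL : Module.Basis (Fin m) ℤ_[p] L := bN.map eqNL with hbL
  set bfun : Fin m → (Fin n → ℚ_[p]) := fun i => (bL i : Fin n → ℚ_[p]) with hbfun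
  have hli : LinearIndependent ℚ_[p] bfun := by
    refine (LinearIndependent.iff_fractionRing ℤ_[p] ℚ_[p]).mp ?_
    exact bL.linearIndependent.map' L.subtype (Submodule.ker_subtype L)
  have hmemspanZ : ∀ v ∈ L, v ∈ Submodule.span ℤ_[p] (Set.range bfun) := by
    intro v hv
    have : (⟨v, hv⟩ : L) = ∑ i, bL.repr ⟨v, hv⟩ i • bL i := (bL.sum_repr ⟨v, hv⟩).symm
    have hv2 : v = ∑ i, bL.repr ⟨v, hv⟩ i • bfun i := by
      have := congrArg (Subtype.val) this
      exact this.trans (by rw [AddSubmonoidClass.coe_finset_sum]; rfl)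
    rw [hv2]
    exact Submodule.sum_mem _ fun i _ =>
      Submodule.smul_mem _ _ (Submodule.subset_span ⟨i, rfl⟩)
  have hspan : ⊤ ≤ Submodule.span ℚ_[p] (Set.range bfun) := by
    have h1 : Set.range ⇑e ⊆ ↑(Submodule.span ℚ_[p] (Set.range bfun)) := by
      rintro _ ⟨j, rfl⟩
      have heL : e j ∈ L := hL0L (Submodule.subset_span ⟨j, rfl⟩)
      exact Submodule.span_subset_span ℤ_[p] ℚ_[p] _ (hmemspanZ (e j) heL)
    calc (⊤ : Submodule ℚ_[p] (Fin n → ℚ_[p])) = Submodule.span ℚ_[p] (Set.range ⇑e) :=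
          e.span_eq.symm
      _ ≤ Submodule.span ℚ_[p] (Set.range bfun) := Submodule.span_le.mpr h1
  set bV : Module.Basis (Fin m) ℚ_[p] (Fin n → ℚ_[p]) := Module.Basis.mk hli hspan with hbV
  have hmn : m = n := by
    have h1 := Module.finrank_eq_card_basis bV
    simp [Module.finrank_pi] at h1
    omega
  subst hmn
  -- the change of basis matrix
  set g : GL (Fin m) ℚ_[p] :=
    ⟨e.toMatrix ⇑bV, bV.toMatrix ⇑e, Module.Basis.toMatrix_mul_toMatrix_flip _ _,
      Module.Basis.toMatrix_mul_toMatrix_flip _ _⟩ with hg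
  refine ⟨g, fun x hx => ?_⟩
  have hbVL : ∀ j, bV j ∈ L := by
    intro j
    rw [hbV, Module.Basis.mk_apply]
    exact (bL j).2
  have hrepr : ∀ (v : Fin m → ℚ_[p]) (hv : v ∈ L) (i),
      bV.repr v i = ((bL.repr ⟨v, hv⟩ i : ℤ_[p]) : ℚ_[p]) := by
    intro v hv i
    have hsm : ∀ (a : ℤ_[p]) (w : L), ((a • w : L) : Fin m → ℚ_[p]) =
        (a : ℚ_[p]) • (w : Fin m → ℚ_[p]) := by
      intro a w
      rw [Submodule.coe_smul, ← PadicInt.algebraMap_apply, algebraMap_smul]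
    have hv2 : (∑ j, ((bL.repr ⟨v, hv⟩ j : ℤ_[p]) : ℚ_[p]) • bV j) = v := by
      have h : _ = v := congrArg (Subtype.val) (bL.sum_repr ⟨v, hv⟩)
      conv_rhs => rw [← h]
      rw [AddSubmonoidClass.coe_finset_sum]
      refine Finset.sum_congr rfl fun j _ => ?_
      rw [hsm, hbV, Module.Basis.mk_apply, hbfun]
    conv_lhs => rw [← hv2]
    rw [bV.repr_sum_self]
  -- key: for y ∈ G, the conjugated matrix has integral entries
  have key : ∀ y, ∀ hy : y ∈ G, ∃ A : Matrix (Fin m) (Fin m) ℤ_[p],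
      A.map (PadicInt.Coe.ringHom (p := p)) = ((g⁻¹ * y * g : GL (Fin m) ℚ_[p]) :
        Matrix (Fin m) (Fin m) ℚ_[p]) := by
    intro y hy
    set f := Matrix.toLin' ((y : GL (Fin m) ℚ_[p]) : Matrix (Fin m) (Fin m) ℚ_[p]) with hf
    have hfL : ∀ j, f (bV j) ∈ L := fun j => hstab ⟨y, hy⟩ _ (hbVL j)
    refine ⟨Matrix.of fun i j => bL.repr ⟨f (bV j), hfL j⟩ i, ?_⟩
    have hmat : ((g⁻¹ * y * g : GL (Fin m) ℚ_[p]) : Matrix (Fin m) (Fin m) ℚ_[p]) =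
        LinearMap.toMatrix bV bV f := by
      have hY : LinearMap.toMatrix e e f =
          ((y : GL (Fin m) ℚ_[p]) : Matrix (Fin m) (Fin m) ℚ_[p]) := by
        rw [he, LinearMap.toMatrix_eq_toMatrix', hf, LinearMap.toMatrix'_toLin']
      have hginv : ((g⁻¹ : GL (Fin m) ℚ_[p]) : Matrix (Fin m) (Fin m) ℚ_[p]) =
          bV.toMatrix ⇑e := rfl
      have hgval : ((g : GL (Fin m) ℚ_[p]) : Matrix (Fin m) (Fin m) ℚ_[p]) =
          e.toMatrix ⇑bV := rfl
      rw [Units.val_mul, Units.val_mul, hginv, hgval, ← hY,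
        basis_toMatrix_mul_linearMap_toMatrix_mul_basis_toMatrix]
    rw [hmat]
    ext i j
    rw [Matrix.map_apply, Matrix.of_apply, LinearMap.toMatrix_apply]
    exact (hrepr (f (bV j)) (hfL j) i).symm
  obtain ⟨A, hA⟩ := key x hx
  obtain ⟨A', hA'⟩ := key x⁻¹ (inv_mem hx)
  have hmapinj : Function.Injective fun B : Matrix (Fin m) (Fin m) ℤ_[p] =>
      B.map (PadicInt.Coe.ringHom (p := p)) := by
    intro B B' h
    ext i j
    have h2 := congrArg (fun M : Matrix (Fin m) (Fin m) ℚ_[p] => M i j) h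
    simp only [Matrix.map_apply] at h2
    exact Subtype.ext h2
  have h1 : A * A' = 1 := by
    apply hmapinj
    show (A * A').map _ = (1 : Matrix (Fin m) (Fin m) ℤ_[p]).map _
    rw [Matrix.map_mul, hA, hA', Matrix.map_one _ (map_zero _) (map_one _)]
    have : (g⁻¹ * x * g) * (g⁻¹ * x⁻¹ * g) = 1 := by group
    calc ((g⁻¹ * x * g : GL (Fin m) ℚ_[p]) : Matrix (Fin m) (Fin m) ℚ_[p]) *
          ((g⁻¹ * x⁻¹ * g : GL (Fin m) ℚ_[p]) : Matrix (Fin m) (Fin m) ℚ_[p])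
        = (((g⁻¹ * x * g) * (g⁻¹ * x⁻¹ * g) : GL (Fin m) ℚ_[p]) :
            Matrix (Fin m) (Fin m) ℚ_[p]) := (Units.val_mul _ _).symm
      _ = 1 := by rw [this]; rfl
  have h2 : A' * A = 1 := by
    apply hmapinj
    show (A' * A).map _ = (1 : Matrix (Fin m) (Fin m) ℤ_[p]).map _
    rw [Matrix.map_mul, hA, hA', Matrix.map_one _ (map_zero _) (map_one _)]
    have : (g⁻¹ * x⁻¹ * g) * (g⁻¹ * x * g) = 1 := by group
    calc ((g⁻¹ * x⁻¹ * g : GL (Fin m) ℚ_[p]) : Matrix (Fin m) (Fin m) ℚ_[p]) *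
          ((g⁻¹ * x * g : GL (Fin m) ℚ_[p]) : Matrix (Fin m) (Fin m) ℚ_[p])
        = (((g⁻¹ * x⁻¹ * g) * (g⁻¹ * x * g) : GL (Fin m) ℚ_[p]) :
            Matrix (Fin m) (Fin m) ℚ_[p]) := (Units.val_mul _ _).symm
      _ = 1 := by rw [this]; rfl
  refine ⟨⟨A, A', h1, h2⟩, ?_⟩
  apply Units.ext
  show ((PadicInt.Coe.ringHom (p := p)).mapMatrix : Matrix (Fin m) (Fin m) ℤ_[p] →+*
      Matrix (Fin m) (Fin m) ℚ_[p]) A = _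
  rw [RingHom.mapMatrix_apply]
  exact hA
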